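/- arXiv:2604.22392 — 2 statements merged into one kernel-verified Lean document; each statement's English description precedes it below -/
import Mathlib

section
/- If problem (P2-R) admits an optimal solution, then it admits an optimal solution (t*, W̄_1, …, W̄_K, W̄_S) in which every matrix W̄_k (k = 1, …, K) has rank at most 1; i.e., W̄_k = w_k w_kᴴ for some vector w_k ∈ ℂ^N. -/
open Matrix ComplexOrder


/-- The quadratic form `M ↦ hᴴ M h` as a linear map. -/
noncomputable def qf {N : ℕ} (h : Fin N → ℂ) : Matrix (Fin N) (Fin N) ℂ →ₗ[ℂ] ℂ where
  toFun M := star h ⬝ᵥ (M *ᵥ h)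
  map_add' A B := by simp [Matrix.add_mulVec, dotProduct_add]
  map_smul' r A := by simp [Matrix.smul_mulVec, dotProduct_smul]

lemma qf_apply {N : ℕ} (h : Fin N → ℂ) (M : Matrix (Fin N) (Fin N) ℂ) :
    qf h M = star h ⬝ᵥ (M *ᵥ h) := rfl

lemma vecMulVec_mulVec' {N : ℕ} (u v x : Fin N → ℂ) :
    vecMulVec u v *ᵥ x = (v ⬝ᵥ x) • u := by
  ext i
  simp only [vecMulVec_apply, mulVec, dotProduct, Pi.smul_apply, smul_eq_mul, Finset.sum_mul]
  exact Finset.sum_congr rfl fun j _ => by ring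

lemma vecMulVec_rank_le' {N : ℕ} (w v : Fin N → ℂ) : (vecMulVec w v).rank ≤ 1 := by
  rw [vecMulVec_eq (Fin 1)]
  exact (Matrix.rank_mul_le_right _ _).trans ((Matrix.rank_le_card_height _).trans (by simp))

lemma vecMulVec_smul_star {N : ℕ} (t : ℂ) (u : Fin N → ℂ) :
    vecMulVec (t • u) (star (t • u)) = (t * star t) • vecMulVec u (star u) := by
  ext i j
  simp only [vecMulVec_apply, Pi.smul_apply, Pi.star_apply, smul_eq_mul, star_mul',
    Matrix.smul_apply]
  ring

lemma cs' {N : ℕ} (a b : Fin N → ℂ) :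
    (star a ⬝ᵥ b) * (star b ⬝ᵥ a) ≤ (star b ⬝ᵥ b) * (star a ⬝ᵥ a) := by
  set a' : EuclideanSpace ℂ (Fin N) := (WithLp.equiv 2 _).symm a
  set b' : EuclideanSpace ℂ (Fin N) := (WithLp.equiv 2 _).symm b
  have h1 : star a ⬝ᵥ b = inner ℂ a' b' := by rw [dotProduct_comm]; rfl
  have h2 : star b ⬝ᵥ a = inner ℂ b' a' := by rw [dotProduct_comm]; rfl
  have h3 : star a ⬝ᵥ a = ((‖a'‖ : ℂ)) ^ 2 := by
    rw [dotProduct_comm]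
    exact inner_self_eq_norm_sq_to_K a'
  have h4 : star b ⬝ᵥ b = ((‖b'‖ : ℂ)) ^ 2 := by
    rw [dotProduct_comm]
    exact inner_self_eq_norm_sq_to_K b'
  rw [h1, h2, h3, h4, ← inner_conj_symm b' a']
  set z : ℂ := inner ℂ a' b' with hz
  have h5 : ‖z‖ ≤ ‖a'‖ * ‖b'‖ := norm_inner_le_norm a' b'
  calc z * (starRingEnd ℂ) z = ((Complex.normSq z : ℝ) : ℂ) := by
        rw [Complex.mul_conj]
    _ ≤ ((‖b'‖ ^ 2 * ‖a'‖ ^ 2 : ℝ) : ℂ) := by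
        rw [Complex.real_le_real, Complex.normSq_eq_norm_sq]
        nlinarith [norm_nonneg z, norm_nonneg a', norm_nonneg b']
    _ = ((‖b'‖ : ℂ)) ^ 2 * ((‖a'‖ : ℂ)) ^ 2 := by push_cast; ring

open scoped MatrixOrder in
noncomputable def Matrix.PosSemidef.sqrt {N : ℕ} {W : Matrix (Fin N) (Fin N) ℂ}
    (_hW : W.PosSemidef) : Matrix (Fin N) (Fin N) ℂ := CFC.sqrt W

open scoped MatrixOrder in
lemma Matrix.PosSemidef.posSemidef_sqrt {N : ℕ} {W : Matrix (Fin N) (Fin N) ℂ}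
    (hW : W.PosSemidef) : hW.sqrt.PosSemidef := (CFC.sqrt_nonneg W).posSemidef

open scoped MatrixOrder in
lemma Matrix.PosSemidef.sqrt_mul_self {N : ℕ} {W : Matrix (Fin N) (Fin N) ℂ}
    (hW : W.PosSemidef) : hW.sqrt * hW.sqrt = W := CFC.sqrt_mul_sqrt_self W hW.nonneg

lemma rot {N : ℕ} {W : Matrix (Fin N) (Fin N) ℂ} (hW : W.PosSemidef)
    (x y : Fin N → ℂ) :
    star x ⬝ᵥ (W *ᵥ y) = star (hW.sqrt *ᵥ x) ⬝ᵥ (hW.sqrt *ᵥ y) := by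
  rw [star_mulVec, hW.posSemidef_sqrt.1.eq, ← dotProduct_mulVec, mulVec_mulVec,
    hW.sqrt_mul_self]

lemma star_mulVec_dot {N : ℕ} {W : Matrix (Fin N) (Fin N) ℂ} (hW : W.IsHermitian)
    (h x : Fin N → ℂ) : star (W *ᵥ h) ⬝ᵥ x = star h ⬝ᵥ (W *ᵥ x) := by
  rw [star_mulVec, hW.eq, ← dotProduct_mulVec]

lemma psd_sub {N : ℕ} {W : Matrix (Fin N) (Fin N) ℂ} (hW : W.PosSemidef)
    (h : Fin N → ℂ) {c : ℝ} (hc : 0 < c) (hch : star h ⬝ᵥ (W *ᵥ h) = (c : ℂ)) :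
    (W - ((c⁻¹ : ℝ) : ℂ) • vecMulVec (W *ᵥ h) (star (W *ᵥ h))).PosSemidef := by
  set u := W *ᵥ h with hu
  refine PosSemidef.of_dotProduct_mulVec_nonneg ?_ ?_
  · refine hW.1.sub ?_
    show _ = _
    rw [conjTranspose_smul]
    congr 1
    · simp [Complex.star_def, Complex.conj_ofReal]
    · ext i j
      simp [vecMulVec_apply, conjTranspose_apply, mul_comm]
  · intro x
    have hmv : (W - ((c⁻¹ : ℝ) : ℂ) • vecMulVec u (star u)) *ᵥ x
        = W *ᵥ x - ((c⁻¹ : ℝ) : ℂ) • ((star u ⬝ᵥ x) • u) := by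
      rw [Matrix.sub_mulVec, Matrix.smul_mulVec, vecMulVec_mulVec']
    rw [hmv, dotProduct_sub, dotProduct_smul, dotProduct_smul, sub_nonneg]
    set a := hW.sqrt *ᵥ x with ha
    set b := hW.sqrt *ᵥ h with hb
    have h1 : star x ⬝ᵥ (W *ᵥ x) = star a ⬝ᵥ a := rot hW x x
    have h2 : star x ⬝ᵥ u = star a ⬝ᵥ b := rot hW x h
    have h3 : star u ⬝ᵥ x = star b ⬝ᵥ a := by
      rw [hu, star_mulVec_dot hW.1]
      exact rot hW h x
    have h4 : ((c : ℝ) : ℂ) = star b ⬝ᵥ b := by rw [← hch]; exact rot hW h h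
    rw [h2, h3, h1, smul_eq_mul, smul_eq_mul]
    have key : (star a ⬝ᵥ b) * (star b ⬝ᵥ a) ≤ (star b ⬝ᵥ b) * (star a ⬝ᵥ a) := cs' a b
    have hcinv : (0 : ℂ) ≤ ((c⁻¹ : ℝ) : ℂ) := by
      rw [← Complex.ofReal_zero, Complex.real_le_real]
      positivity
    rw [mul_comm (star b ⬝ᵥ a) (star a ⬝ᵥ b)]
    calc ((c⁻¹ : ℝ) : ℂ) * ((star a ⬝ᵥ b) * (star b ⬝ᵥ a))
        ≤ ((c⁻¹ : ℝ) : ℂ) * ((star b ⬝ᵥ b) * (star a ⬝ᵥ a)) :=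
          mul_le_mul_of_nonneg_left key hcinv
      _ = (((c⁻¹ : ℝ) : ℂ) * ((c : ℝ) : ℂ)) * (star a ⬝ᵥ a) := by rw [← h4]; ring
      _ = star a ⬝ᵥ a := by
          rw [← Complex.ofReal_mul, inv_mul_cancel₀ (ne_of_gt hc), Complex.ofReal_one, one_mul]

lemma vecMulVec_psd {N : ℕ} (w : Fin N → ℂ) : (vecMulVec w (star w)).PosSemidef := by
  rw [vecMulVec_eq (Fin 1), ← conjTranspose_replicateCol]
  exact posSemidef_self_mul_conjTranspose _

lemma qf_expand {N K : ℕ} (h : Fin N → ℂ) (γ : ℝ) (W : Fin K → Matrix (Fin N) (Fin N) ℂ)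
    (k : Fin K) :
    star h ⬝ᵥ ((W k - ((γ : ℝ) : ℂ) • ∑ i ∈ Finset.univ.erase k, W i) *ᵥ h)
      = qf h (W k) - (γ : ℂ) * ∑ i ∈ Finset.univ.erase k, qf h (W i) := by
  rw [← qf_apply, map_sub, _root_.map_smul, map_sum, smul_eq_mul]

/-- The 2×2 matrix `B(t, R)` from problem (P2-R). -/
noncomputable def Bmat {N : ℕ} (A1 A2 A3 : Matrix (Fin N) (Fin N) ℂ)
    (t : ℝ) (R : Matrix (Fin N) (Fin N) ℂ) : Matrix (Fin 2) (Fin 2) ℂ :=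
  !![(A1 * R).trace - (t : ℂ), (A2 * R).trace;
     (A2ᴴ * R).trace, (A3 * R).trace]

/-- Feasibility of a tuple `(t, W_1, …, W_K, W_S)` for problem (P2-R). -/
def Feasible {N K : ℕ} (A1 A2 A3 : Matrix (Fin N) (Fin N) ℂ)
    (h : Fin K → Fin N → ℂ) (γ σsq : Fin K → ℝ) (P : ℝ)
    (t : ℝ) (W : Fin K → Matrix (Fin N) (Fin N) ℂ)
    (WS : Matrix (Fin N) (Fin N) ℂ) : Prop :=
  (∀ k, (W k).PosSemidef) ∧ WS.PosSemidef ∧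
  (Bmat A1 A2 A3 t ((∑ k, W k) + WS)).PosSemidef ∧
  (∀ k, ((γ k * σsq k : ℝ) : ℂ) ≤
      star (h k) ⬝ᵥ ((W k - ((γ k : ℝ) : ℂ) • ∑ i ∈ Finset.univ.erase k, W i) *ᵥ h k)) ∧
  ((∑ k, W k) + WS).trace ≤ (P : ℂ)

/-- Optimality of a tuple for problem (P2-R). -/
def Optimal {N K : ℕ} (A1 A2 A3 : Matrix (Fin N) (Fin N) ℂ)
    (h : Fin K → Fin N → ℂ) (γ σsq : Fin K → ℝ) (P : ℝ)
    (t : ℝ) (W : Fin K → Matrix (Fin N) (Fin N) ℂ)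
    (WS : Matrix (Fin N) (Fin N) ℂ) : Prop :=
  Feasible A1 A2 A3 h γ σsq P t W WS ∧
  ∀ (t' : ℝ) (W' : Fin K → Matrix (Fin N) (Fin N) ℂ) (WS' : Matrix (Fin N) (Fin N) ℂ),
    Feasible A1 A2 A3 h γ σsq P t' W' WS' → t' ≤ t


/-- If problem (P2-R) admits an optimal solution, then it admits an optimal solution in which
every communication covariance matrix `W̄_k` has rank at most 1, i.e. `W̄_k = w_k w_kᴴ`
for some vector `w_k ∈ ℂ^N`. -/
theorem stmt1 {N K : ℕ} (A1 A2 A3 : Matrix (Fin N) (Fin N) ℂ)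
    (hA1 : A1.IsHermitian) (hA3 : A3.IsHermitian)
    (h : Fin K → Fin N → ℂ) (γ σsq : Fin K → ℝ)
    (hγ : ∀ k, 0 < γ k) (hσ : ∀ k, 0 < σsq k) (P : ℝ) (hP : 0 < P)
    (hex : ∃ (t : ℝ) (W : Fin K → Matrix (Fin N) (Fin N) ℂ) (WS : Matrix (Fin N) (Fin N) ℂ),
      Optimal A1 A2 A3 h γ σsq P t W WS) :
    ∃ (t : ℝ) (Wbar : Fin K → Matrix (Fin N) (Fin N) ℂ) (WbarS : Matrix (Fin N) (Fin N) ℂ),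
      Optimal A1 A2 A3 h γ σsq P t Wbar WbarS ∧
      ∀ k, (Wbar k).rank ≤ 1 ∧ ∃ w : Fin N → ℂ, Wbar k = vecMulVec w (star w) := by
  obtain ⟨t, W, WS, ⟨hWpsd, hWSpsd, hB, hcon, htr⟩, hbest⟩ := hex
  have hγc : ∀ k, (0 : ℂ) ≤ ((γ k : ℝ) : ℂ) := fun k => by
    rw [← Complex.ofReal_zero, Complex.real_le_real]; exact (hγ k).le
  have hconq : ∀ k, ((γ k * σsq k : ℝ) : ℂ) ≤
      qf (h k) (W k) - ((γ k : ℝ) : ℂ) * ∑ i ∈ Finset.univ.erase k, qf (h k) (W i) := by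
    intro k
    have := hcon k
    rwa [qf_expand (h k) (γ k) W k] at this
  have hsum_nonneg : ∀ k, (0 : ℂ) ≤ ∑ i ∈ Finset.univ.erase k, qf (h k) (W i) :=
    fun k => Finset.sum_nonneg fun i _ => (hWpsd i).dotProduct_mulVec_nonneg (h k)
  have hqW : ∀ k, ((γ k * σsq k : ℝ) : ℂ) ≤ qf (h k) (W k) := fun k =>
    (hconq k).trans (sub_le_self _ (mul_nonneg (hγc k) (hsum_nonneg k)))
  set r : Fin K → ℝ := fun k => (qf (h k) (W k)).re with hr
  have hre : ∀ k, qf (h k) (W k) = ((r k : ℝ) : ℂ) := fun k =>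
    Complex.eq_re_of_ofReal_le (hqW k)
  have hrpos : ∀ k, 0 < r k := by
    intro k
    have h1 := hqW k
    rw [hre k, Complex.real_le_real] at h1
    exact lt_of_lt_of_le (mul_pos (hγ k) (hσ k)) h1
  set u : Fin K → Fin N → ℂ := fun k => W k *ᵥ h k with hu
  have hch : ∀ k, star (h k) ⬝ᵥ (W k *ᵥ h k) = (((r k) : ℝ) : ℂ) := fun k => hre k
  set Wb : Fin K → Matrix (Fin N) (Fin N) ℂ :=
    fun k => (((r k)⁻¹ : ℝ) : ℂ) • vecMulVec (u k) (star (u k)) with hWb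
  have hdiff : ∀ k, (W k - Wb k).PosSemidef := fun k =>
    psd_sub (hWpsd k) (h k) (hrpos k) (hch k)
  set w : Fin K → Fin N → ℂ := fun k => ((((Real.sqrt (r k))⁻¹ : ℝ) : ℂ)) • u k with hw
  have hWbform : ∀ k, Wb k = vecMulVec (w k) (star (w k)) := by
    intro k
    rw [hWb, hw]
    simp only
    rw [vecMulVec_smul_star]
    congr 1
    rw [show star ((((Real.sqrt (r k))⁻¹ : ℝ) : ℂ)) = (((Real.sqrt (r k))⁻¹ : ℝ) : ℂ) by
      simp [Complex.star_def, Complex.conj_ofReal]]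
    rw [← Complex.ofReal_mul, ← mul_inv, Real.mul_self_sqrt (hrpos k).le]
  have hWbpsd : ∀ k, (Wb k).PosSemidef := fun k => (hWbform k) ▸ vecMulVec_psd (w k)
  set WbS : Matrix (Fin N) (Fin N) ℂ := WS + ∑ k, (W k - Wb k) with hWbS
  have hRsame : (∑ k, Wb k) + WbS = (∑ k, W k) + WS := by
    rw [hWbS, Finset.sum_sub_distrib]
    abel
  have hqWb : ∀ k, qf (h k) (Wb k) = ((r k : ℝ) : ℂ) := by
    intro k
    rw [qf_apply, hWb]
    simp only
    rw [Matrix.smul_mulVec, vecMulVec_mulVec', dotProduct_smul, dotProduct_smul,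
      smul_eq_mul, smul_eq_mul, hu]
    simp only
    rw [star_mulVec_dot (hWpsd k).1, hch k]
    have hne : ((r k) : ℂ) ≠ 0 := Complex.ofReal_ne_zero.mpr (hrpos k).ne'
    push_cast
    field_simp
  have hmono : ∀ j i, qf (h j) (Wb i) ≤ qf (h j) (W i) := by
    intro j i
    have h0 := (hdiff i).dotProduct_mulVec_nonneg (h j)
    rw [← qf_apply, map_sub] at h0
    exact sub_nonneg.mp h0
  refine ⟨t, Wb, WbS, ⟨⟨hWbpsd, ?_, ?_, ?_, ?_⟩, fun t' W' WS' hf => hbest t' W' WS' hf⟩, ?_⟩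
  · -- WbS PSD
    refine hWSpsd.add ?_
    classical
    refine Finset.sum_induction _ _ (fun a b ha hb => ha.add hb) ?_ (fun i _ => hdiff i)
    exact Matrix.PosSemidef.zero
  · rw [hRsame]; exact hB
  · -- constraint
    intro k
    rw [qf_expand (h k) (γ k) Wb k]
    refine (hconq k).trans ?_
    refine sub_le_sub ?_ ?_
    · rw [hqWb k, hre k]
    · exact mul_le_mul_of_nonneg_left (Finset.sum_le_sum fun i _ => hmono k i) (hγc k)
  · rw [hRsame]; exact htr
  · intro k
    exact ⟨(hWbform k) ▸ vecMulVec_rank_le' (w k) (star (w k)), w k, hWbform k⟩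
end

section
/- (Feasibility preservation in the rank-reduction step of Proposition 2.) Fix vectors f_1, …, f_K, h_1, …, h_K ∈ ℂ^N, a matrix J ∈ ℂ^{N×m}, reals γ_k > 0 and σ_k² > 0, real numbers Δ_1, …, Δ_K, a Hermitian matrix Δ_S ∈ ℂ^{m×m}, and a nonzero real ξ. Set W̄_k = f_k f_kᴴ and W̄_S = J Jᴴ. Assume: (a) |f_kᴴ h_k|² − γ_k Σ_{i≠k} |f_iᴴ h_k|² ≥ γ_k σ_k² for every k; (b) |f_kᴴ h_k|² Δ_k − γ_k Σ_{i≠k} |f_iᴴ h_k|² Δ_i = 0 for every k; (c) Σ_{k=1}^K (f_kᴴ f_k) Δ_k + tr(Jᴴ J Δ_S) = 0; (d) |Δ_k| ≤ |ξ| for every k and |vᴴ Δ_S v| ≤ |ξ|·(vᴴ v) for every v ∈ ℂ^m. Define Ŵ_k = (1 − Δ_k/ξ) W̄_k and Ŵ_S = J (I_m − Δ_S/ξ) Jᴴ. Then: (1) every Ŵ_k and Ŵ_S is positive semidefinite; (2) h_kᴴ(Ŵ_k − γ_k Σ_{i≠k} Ŵ_i) h_k ≥ γ_k σ_k² for every k;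 and (3) tr(Σ_{k=1}^K Ŵ_k + Ŵ_S) = tr(Σ_{k=1}^K W̄_k + W̄_S). -/
open Matrix ComplexOrder

lemma quad_vecMulVec {n : ℕ} (a x : Fin n → ℂ) :
    star x ⬝ᵥ (vecMulVec a (star a) *ᵥ x) = (Complex.normSq (star a ⬝ᵥ x) : ℂ) := by
  have h1 : vecMulVec a (star a) *ᵥ x = fun i => a i * (star a ⬝ᵥ x) := by
    funext i
    simp [mulVec, vecMulVec, dotProduct, Finset.mul_sum, mul_assoc]
  rw [h1]
  have h2 : star x ⬝ᵥ (fun i => a i * (star a ⬝ᵥ x)) = (star x ⬝ᵥ a) * (star a ⬝ᵥ x) := by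
    simp only [dotProduct, Finset.sum_mul, mul_assoc]
  rw [h2, star_dotProduct]
  simp [Complex.star_def, Complex.normSq_eq_conj_mul_self]

lemma psd_vecMulVec {n : ℕ} (a : Fin n → ℂ) : (vecMulVec a (star a)).PosSemidef := by
  apply PosSemidef.of_dotProduct_mulVec_nonneg
  · ext i j
    simp [conjTranspose_apply, vecMulVec_apply, mul_comm]
  · intro x
    rw [quad_vecMulVec]
    exact_mod_cast Complex.normSq_nonneg _

lemma psd_real_smul {n : ℕ} {M : Matrix (Fin n) (Fin n) ℂ} (hM : M.PosSemidef)
    {c : ℝ} (hc : 0 ≤ c) : ((c : ℂ) • M).PosSemidef := by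
  apply PosSemidef.of_dotProduct_mulVec_nonneg
  · ext i j
    simp [conjTranspose_apply, hM.1.apply]
  · intro x
    rw [smul_mulVec, dotProduct_smul]
    have := hM.dotProduct_mulVec_nonneg x
    rw [Complex.le_def] at this ⊢
    constructor
    · simp only [smul_eq_mul, Complex.mul_re, Complex.ofReal_re, Complex.ofReal_im,
        Complex.zero_re, zero_mul, sub_zero] at *
      exact mul_nonneg hc this.1
    · simp only [smul_eq_mul, Complex.mul_im, Complex.ofReal_re, Complex.ofReal_im,
        Complex.zero_im, zero_mul, add_zero] at *
      simp [← this.2]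

lemma herm_quad_star {n : ℕ} {A : Matrix (Fin n) (Fin n) ℂ} (hA : A.IsHermitian)
    (v : Fin n → ℂ) : star (star v ⬝ᵥ (A *ᵥ v)) = star v ⬝ᵥ (A *ᵥ v) := by
  conv_lhs => rw [star_dotProduct v (A *ᵥ v), star_star, star_mulVec]
  rw [hA.eq, ← dotProduct_mulVec]

lemma dotProduct_sum' {n : ℕ} {ι : Type*} (s : Finset ι) (v : Fin n → ℂ)
    (w : ι → Fin n → ℂ) : v ⬝ᵥ (∑ i ∈ s, w i) = ∑ i ∈ s, v ⬝ᵥ w i := by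
  simp only [dotProduct, Finset.sum_apply, Finset.mul_sum]
  exact Finset.sum_comm

lemma sum_mulVec' {n m : ℕ} {ι : Type*} (s : Finset ι) (M : ι → Matrix (Fin n) (Fin m) ℂ)
    (v : Fin m → ℂ) : (∑ i ∈ s, M i) *ᵥ v = ∑ i ∈ s, M i *ᵥ v :=
  map_sum (mulVec.addMonoidHomLeft v) M s

/-- Feasibility preservation in the rank-reduction step of Proposition 2: with
`W̄_k = f_k f_kᴴ`, `W̄_S = J Jᴴ`, `Ŵ_k = (1 − Δ_k/ξ) W̄_k`, `Ŵ_S = J(I − Δ_S/ξ)Jᴴ`,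
under hypotheses (a)–(d), all `Ŵ_k`, `Ŵ_S` are PSD, the SINR constraints hold for the
hatted matrices and the total transmit power is unchanged. -/
theorem stmt13 {N K m : ℕ}
    (f h : Fin K → Fin N → ℂ) (J : Matrix (Fin N) (Fin m) ℂ)
    (γ σsq : Fin K → ℝ) (hγ : ∀ k, 0 < γ k) (hσ : ∀ k, 0 < σsq k)
    (Δ : Fin K → ℝ) (ΔS : Matrix (Fin m) (Fin m) ℂ) (hΔS : ΔS.IsHermitian)
    (ξ : ℝ) (hξ : ξ ≠ 0)
    (Wbar : Fin K → Matrix (Fin N) (Fin N) ℂ)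
    (hWbar : ∀ k, Wbar k = vecMulVec (f k) (star (f k)))
    (WbarS : Matrix (Fin N) (Fin N) ℂ) (hWbarS : WbarS = J * Jᴴ)
    (ha : ∀ k, γ k * σsq k ≤ Complex.normSq (star (f k) ⬝ᵥ h k)
        - γ k * ∑ i ∈ Finset.univ.erase k, Complex.normSq (star (f i) ⬝ᵥ h k))
    (hb : ∀ k, Complex.normSq (star (f k) ⬝ᵥ h k) * Δ k
        - γ k * ∑ i ∈ Finset.univ.erase k, Complex.normSq (star (f i) ⬝ᵥ h k) * Δ i = 0)
    (hc : ∑ k, (star (f k) ⬝ᵥ f k) * ((Δ k : ℝ) : ℂ) + (Jᴴ * J * ΔS).trace = 0)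
    (hd1 : ∀ k, |Δ k| ≤ |ξ|)
    (hd2 : ∀ v : Fin m → ℂ,
      ‖star v ⬝ᵥ (ΔS *ᵥ v)‖ ≤ |ξ| * (star v ⬝ᵥ v).re)
    (What : Fin K → Matrix (Fin N) (Fin N) ℂ)
    (hWhat : ∀ k, What k = ((1 - Δ k / ξ : ℝ) : ℂ) • Wbar k)
    (WhatS : Matrix (Fin N) (Fin N) ℂ)
    (hWhatS : WhatS = J * ((1 : Matrix (Fin m) (Fin m) ℂ) - (ξ : ℂ)⁻¹ • ΔS) * Jᴴ) :
    ((∀ k, (What k).PosSemidef) ∧ WhatS.PosSemidef) ∧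
    (∀ k, ((γ k * σsq k : ℝ) : ℂ) ≤
        star (h k) ⬝ᵥ ((What k - ((γ k : ℝ) : ℂ) •
          ∑ i ∈ Finset.univ.erase k, What i) *ᵥ h k)) ∧
    ((∑ k, What k) + WhatS).trace = ((∑ k, Wbar k) + WbarS).trace := by
  have hcoef : ∀ k, (0 : ℝ) ≤ 1 - Δ k / ξ := by
    intro k
    have h1 : |Δ k / ξ| ≤ 1 := by
      rw [abs_div]
      rw [div_le_one (abs_pos.mpr hξ)]
      exact hd1 k
    have := (abs_le.mp h1).2
    linarith
  refine ⟨⟨fun k => ?_, ?_⟩, fun k => ?_, ?_⟩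
  · rw [hWhat, hWbar]
    exact psd_real_smul (psd_vecMulVec _) (hcoef k)
  · -- PSD of WhatS
    rw [hWhatS]
    have hM : ((1 : Matrix (Fin m) (Fin m) ℂ) - (ξ : ℂ)⁻¹ • ΔS).PosSemidef := by
      apply PosSemidef.of_dotProduct_mulVec_nonneg
      · have hst : star ((ξ : ℂ)⁻¹) = (ξ : ℂ)⁻¹ := by
          rw [Complex.star_def, ← Complex.ofReal_inv, Complex.conj_ofReal]
        unfold Matrix.IsHermitian
        rw [conjTranspose_sub, conjTranspose_smul, conjTranspose_one, hΔS.eq, hst]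
      · intro v
        rw [sub_mulVec, dotProduct_sub, one_mulVec, smul_mulVec, dotProduct_smul]
        set q := star v ⬝ᵥ (ΔS *ᵥ v) with hq
        have hqim : q.im = 0 := by
          have := herm_quad_star hΔS v
          rw [← hq] at this
          have := congrArg Complex.im this
          simp only [Complex.star_def, Complex.conj_im] at this
          linarith
        have habs : |q.re| ≤ |ξ| * (star v ⬝ᵥ v).re := by
          calc |q.re| ≤ ‖q‖ := Complex.abs_re_le_norm q
            _ ≤ _ := hd2 v
        have hvim : (star v ⬝ᵥ v).im = 0 := by
          have h0 := dotProduct_star_self_nonneg v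
          rw [Complex.le_def] at h0
          simp at h0
          exact h0.2.symm
        rw [Complex.le_def]
        constructor
        · simp only [Complex.zero_re, Complex.sub_re, smul_eq_mul, Complex.mul_re,
            Complex.inv_re, Complex.inv_im, Complex.ofReal_re, Complex.ofReal_im,
            Complex.normSq_ofReal, hqim, mul_zero, sub_zero]
          have h1 : ξ / (ξ * ξ) * q.re ≤ |ξ|⁻¹ * |q.re| := by
            rw [div_mul_eq_div_div, div_self hξ, one_div]
            calc ξ⁻¹ * q.re ≤ |ξ⁻¹ * q.re| := le_abs_self _
              _ = |ξ|⁻¹ * |q.re| := by rw [abs_mul, abs_inv]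
          have h2 : |ξ|⁻¹ * |q.re| ≤ (star v ⬝ᵥ v).re := by
            rw [inv_mul_le_iff₀ (abs_pos.mpr hξ)]
            linarith [habs]
          linarith
        · simp only [Complex.zero_im, Complex.sub_im, smul_eq_mul, Complex.mul_im,
            Complex.inv_im, Complex.inv_re, Complex.ofReal_re, Complex.ofReal_im,
            Complex.normSq_ofReal, hqim, hvim, mul_zero, zero_mul, add_zero, neg_zero,
            zero_div, sub_zero]
    exact hM.mul_mul_conjTranspose_same J
  · -- SINR constraint
    have quadW : ∀ i : Fin K, star (h k) ⬝ᵥ (What i *ᵥ h k)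
        = (((1 - Δ i / ξ) * Complex.normSq (star (f i) ⬝ᵥ h k) : ℝ) : ℂ) := by
      intro i
      rw [hWhat, hWbar, smul_mulVec, dotProduct_smul, quad_vecMulVec, smul_eq_mul]
      push_cast
      ring
    rw [sub_mulVec, dotProduct_sub, smul_mulVec, dotProduct_smul,
      sum_mulVec', dotProduct_sum', smul_eq_mul]
    simp only [quadW]
    rw [← Complex.ofReal_sum, ← Complex.ofReal_mul, ← Complex.ofReal_sub,
      Complex.real_le_real]
    set nk := fun i => Complex.normSq (star (f i) ⬝ᵥ h k) with hnk
    have hsum : ∑ i ∈ Finset.univ.erase k, (1 - Δ i / ξ) * nk i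
        = (∑ i ∈ Finset.univ.erase k, nk i) - ξ⁻¹ * ∑ i ∈ Finset.univ.erase k, nk i * Δ i := by
      rw [Finset.mul_sum, ← Finset.sum_sub_distrib]
      apply Finset.sum_congr rfl
      intro i _
      field_simp
    rw [hsum]
    have hb' := hb k
    have ha' := ha k
    have key : (1 - Δ k / ξ) * nk k
        - γ k * ((∑ i ∈ Finset.univ.erase k, nk i) - ξ⁻¹ * ∑ i ∈ Finset.univ.erase k, nk i * Δ i)
        = (nk k - γ k * ∑ i ∈ Finset.univ.erase k, nk i)
          - ξ⁻¹ * (nk k * Δ k - γ k * ∑ i ∈ Finset.univ.erase k, nk i * Δ i) := by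
      field_simp
      ring
    rw [key, hb', mul_zero, sub_zero]
    exact ha'
  · -- trace equality
    have trWbar : ∀ k, (Wbar k).trace = star (f k) ⬝ᵥ f k := by
      intro k
      rw [hWbar]
      simp [Matrix.trace, vecMulVec_apply, dotProduct, mul_comm, Matrix.diag]
    have trWhat : ∀ k, (What k).trace
        = (Wbar k).trace - (ξ : ℂ)⁻¹ * ((Δ k : ℝ) : ℂ) * (Wbar k).trace := by
      intro k
      rw [hWhat, trace_smul]
      push_cast
      rw [smul_eq_mul]
      field_simp
    have trWhatS : WhatS.trace = WbarS.trace - (ξ : ℂ)⁻¹ * (Jᴴ * J * ΔS).trace := by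
      rw [hWhatS, hWbarS]
      rw [trace_mul_comm (J * ((1 : Matrix (Fin m) (Fin m) ℂ) - (ξ : ℂ)⁻¹ • ΔS)) Jᴴ,
        trace_mul_comm J Jᴴ, ← Matrix.mul_assoc]
      rw [Matrix.mul_sub, Matrix.mul_one, Matrix.mul_smul, trace_sub, trace_smul, smul_eq_mul]
    rw [trace_add, trace_add, trace_sum, trace_sum, trWhatS]
    have : ∑ k, (What k).trace
        = ∑ k, (Wbar k).trace - (ξ : ℂ)⁻¹ * ∑ k, ((Δ k : ℝ) : ℂ) * (Wbar k).trace := by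
      rw [Finset.mul_sum, ← Finset.sum_sub_distrib]
      apply Finset.sum_congr rfl
      intro k _
      rw [trWhat k]
      ring
    rw [this]
    have hc' : ∑ k, ((Δ k : ℝ) : ℂ) * (Wbar k).trace + (Jᴴ * J * ΔS).trace = 0 := by
      rw [show ∑ k, ((Δ k : ℝ) : ℂ) * (Wbar k).trace
          = ∑ k, (star (f k) ⬝ᵥ f k) * ((Δ k : ℝ) : ℂ) by
        apply Finset.sum_congr rfl; intro k _; rw [trWbar k]; ring]
      exact hc
    linear_combination (-(ξ : ℂ)⁻¹) * hc'
end
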